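/- For circular Nim CN(5,2), the set of P-positions is exactly the set of positions that, up to rotation and reflection of the 5-cycle, have the form (M, m, c, d, m) where M + m = c + d and M is the maximum stack height of the position. -/
import Mathlib


/-- A legal move in SetNim: at least one stack strictly decreases, all changed
stacks lie in some allowed move set, stacks weakly decrease. -/
def Move {V : Type} (A : Set (Set V)) (p q : V → ℕ) : Prop :=
  q ≠ p ∧ (∀ i, q i ≤ p i) ∧ ∃ a ∈ A, ∀ i, q i ≠ p i → i ∈ a

/-- P-positions: positions all of whose options are N-positions. -/
def PPos {V : Type} [Fintype V] (A : Set (Set V)) (p : V → ℕ) : Prop :=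
  ∀ q, Move A p q → ¬ PPos A q
termination_by Finset.univ.sum p
decreasing_by
  rename_i hq
  obtain ⟨hne, hle, -⟩ := hq
  refine Finset.sum_lt_sum (fun i _ => hle i) ?_
  obtain ⟨i, hi⟩ := Function.ne_iff.mp hne
  exact ⟨i, Finset.mem_univ i, lt_of_le_of_ne (hle i) hi⟩


/-- Move sets of circular Nim CN(5,2): two consecutive stacks. -/
def CN52 : Set (Set (Fin 5)) := {s | ∃ i : Fin 5, s = {i, i + 1}}

/-- The dihedral symmetries of the 5-cycle: rotations (s = false) and
reflections (s = true). -/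
def dih5 (k : Fin 5) (s : Bool) : Fin 5 → Fin 5 := fun i => if s then k - i else k + i

/-- single-center pattern -/
def Qc (p : Fin 5 → ℕ) (i : Fin 5) : Prop :=
  (∀ j, p j ≤ p i) ∧ p (i+1) = p (i+4) ∧ p i + p (i+1) = p (i+2) + p (i+3)

def Q (p : Fin 5 → ℕ) : Prop := ∃ i, Qc p i

def C (a b c d e : ℕ) : Prop :=
  (a ≤ a ∧ b ≤ a ∧ c ≤ a ∧ d ≤ a ∧ e ≤ a) ∧ b = e ∧ a + b = c + d

def QArith (a b c d e : ℕ) : Prop :=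
  C a b c d e ∨ C b c d e a ∨ C c d e a b ∨ C d e a b c ∨ C e a b c d

lemma forall_fin5 {P : Fin 5 → Prop} : (∀ j, P j) ↔ P 0 ∧ P 1 ∧ P 2 ∧ P 3 ∧ P 4 :=
  ⟨fun h => ⟨h 0, h 1, h 2, h 3, h 4⟩, by
    rintro ⟨h0, h1, h2, h3, h4⟩ j
    rcases (by decide : ∀ i : Fin 5, i = 0 ∨ i = 1 ∨ i = 2 ∨ i = 3 ∨ i = 4) j with
      rfl|rfl|rfl|rfl|rfl <;> assumption⟩

lemma fin5_cases : ∀ i : Fin 5, i = 0 ∨ i = 1 ∨ i = 2 ∨ i = 3 ∨ i = 4 := by decide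

lemma Qc0 (p : Fin 5 → ℕ) : Qc p 0 ↔ C (p 0) (p 1) (p 2) (p 3) (p 4) := by
  rw [Qc, forall_fin5]; exact Iff.rfl
lemma Qc1 (p : Fin 5 → ℕ) : Qc p 1 ↔ C (p 1) (p 2) (p 3) (p 4) (p 0) := by
  rw [Qc, forall_fin5]; constructor
  · rintro ⟨⟨h0,h1,h2,h3,h4⟩,e1,e2⟩; exact ⟨⟨h1,h2,h3,h4,h0⟩,e1,e2⟩
  · rintro ⟨⟨h1,h2,h3,h4,h0⟩,e1,e2⟩; exact ⟨⟨h0,h1,h2,h3,h4⟩,e1,e2⟩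
lemma Qc2 (p : Fin 5 → ℕ) : Qc p 2 ↔ C (p 2) (p 3) (p 4) (p 0) (p 1) := by
  rw [Qc, forall_fin5]; constructor
  · rintro ⟨⟨h0,h1,h2,h3,h4⟩,e1,e2⟩; exact ⟨⟨h2,h3,h4,h0,h1⟩,e1,e2⟩
  · rintro ⟨⟨h2,h3,h4,h0,h1⟩,e1,e2⟩; exact ⟨⟨h0,h1,h2,h3,h4⟩,e1,e2⟩
lemma Qc3 (p : Fin 5 → ℕ) : Qc p 3 ↔ C (p 3) (p 4) (p 0) (p 1) (p 2) := by
  rw [Qc, forall_fin5]; constructor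
  · rintro ⟨⟨h0,h1,h2,h3,h4⟩,e1,e2⟩; exact ⟨⟨h3,h4,h0,h1,h2⟩,e1,e2⟩
  · rintro ⟨⟨h3,h4,h0,h1,h2⟩,e1,e2⟩; exact ⟨⟨h0,h1,h2,h3,h4⟩,e1,e2⟩
lemma Qc4 (p : Fin 5 → ℕ) : Qc p 4 ↔ C (p 4) (p 0) (p 1) (p 2) (p 3) := by
  rw [Qc, forall_fin5]; constructor
  · rintro ⟨⟨h0,h1,h2,h3,h4⟩,e1,e2⟩; exact ⟨⟨h4,h0,h1,h2,h3⟩,e1,e2⟩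
  · rintro ⟨⟨h4,h0,h1,h2,h3⟩,e1,e2⟩; exact ⟨⟨h0,h1,h2,h3,h4⟩,e1,e2⟩

lemma Q_arith (p : Fin 5 → ℕ) : Q p ↔ QArith (p 0) (p 1) (p 2) (p 3) (p 4) := by
  constructor
  · rintro ⟨i, h⟩
    rcases fin5_cases i with rfl|rfl|rfl|rfl|rfl
    · exact Or.inl ((Qc0 p).mp h)
    · exact Or.inr (Or.inl ((Qc1 p).mp h))
    · exact Or.inr (Or.inr (Or.inl ((Qc2 p).mp h)))
    · exact Or.inr (Or.inr (Or.inr (Or.inl ((Qc3 p).mp h))))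
    · exact Or.inr (Or.inr (Or.inr (Or.inr ((Qc4 p).mp h))))
  · rintro (h|h|h|h|h)
    exacts [⟨0, (Qc0 p).mpr h⟩, ⟨1, (Qc1 p).mpr h⟩, ⟨2, (Qc2 p).mpr h⟩,
      ⟨3, (Qc3 p).mpr h⟩, ⟨4, (Qc4 p).mpr h⟩]

lemma move_facts {p q : Fin 5 → ℕ} (h : Move CN52 p q) :
    (∀ i, q i ≤ p i) ∧
    (q 0 ≠ p 0 ∨ q 1 ≠ p 1 ∨ q 2 ≠ p 2 ∨ q 3 ≠ p 3 ∨ q 4 ≠ p 4) ∧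
    ((q 2 = p 2 ∧ q 3 = p 3 ∧ q 4 = p 4) ∨
     (q 3 = p 3 ∧ q 4 = p 4 ∧ q 0 = p 0) ∨
     (q 4 = p 4 ∧ q 0 = p 0 ∧ q 1 = p 1) ∨
     (q 0 = p 0 ∧ q 1 = p 1 ∧ q 2 = p 2) ∨
     (q 1 = p 1 ∧ q 2 = p 2 ∧ q 3 = p 3)) := by
  obtain ⟨hne, hle, a, ⟨j, rfl⟩, hsub⟩ := h
  refine ⟨hle, ?_, ?_⟩
  · obtain ⟨i, hi⟩ := Function.ne_iff.mp hne
    rcases fin5_cases i with rfl|rfl|rfl|rfl|rfl <;> tauto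
  · have key : ∀ i : Fin 5, i ≠ j → i ≠ j + 1 → q i = p i := by
      intro i h1 h2
      by_contra hne'
      have := hsub i hne'
      simp only [Set.mem_insert_iff, Set.mem_singleton_iff] at this
      tauto
    rcases fin5_cases j with rfl|rfl|rfl|rfl|rfl
    · exact Or.inl ⟨key 2 (by decide) (by decide), key 3 (by decide) (by decide),
        key 4 (by decide) (by decide)⟩
    · exact Or.inr (Or.inl ⟨key 3 (by decide) (by decide), key 4 (by decide) (by decide),
        key 0 (by decide) (by decide)⟩)
    · exact Or.inr (Or.inr (Or.inl ⟨key 4 (by decide) (by decide), key 0 (by decide) (by decide),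
        key 1 (by decide) (by decide)⟩))
    · exact Or.inr (Or.inr (Or.inr (Or.inl ⟨key 0 (by decide) (by decide),
        key 1 (by decide) (by decide), key 2 (by decide) (by decide)⟩)))
    · exact Or.inr (Or.inr (Or.inr (Or.inr ⟨key 1 (by decide) (by decide),
        key 2 (by decide) (by decide), key 3 (by decide) (by decide)⟩)))

/-- Lemma A: from a Q-position, no move stays in Q. -/
lemma lemA {p q : Fin 5 → ℕ} (hp : Q p) (hmv : Move CN52 p q) : ¬ Q q := by
  intro hq
  rw [Q_arith] at hp hq
  obtain ⟨hle, hne, hpair⟩ := move_facts hmv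
  have l0 := hle 0; have l1 := hle 1; have l2 := hle 2; have l3 := hle 3; have l4 := hle 4
  unfold QArith C at hp hq
  omega

lemma move_of (p : Fin 5 → ℕ) (j : Fin 5) (x y : ℕ) (hx : x ≤ p j) (hy : y ≤ p (j+1))
    (hne : x ≠ p j ∨ y ≠ p (j+1)) :
    Move CN52 p (fun i => if i = j then x else if i = j+1 then y else p i) := by
  have hjj : j + 1 ≠ j := (by decide : ∀ j : Fin 5, j + 1 ≠ j) j
  refine ⟨?_, ?_, {j, j+1}, ⟨j, rfl⟩, ?_⟩
  · intro hqp
    have h1 := congrFun hqp j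
    have h2 := congrFun hqp (j+1)
    simp [hjj] at h1 h2
    tauto
  · intro i
    by_cases h1 : i = j
    · subst h1; simpa using hx
    · by_cases h2 : i = j + 1
      · subst h2; simpa [hjj] using hy
      · simp [h1, h2]
  · intro i hi
    simp only [Set.mem_insert_iff, Set.mem_singleton_iff]
    by_contra hc
    push_neg at hc
    simp [hc.1, hc.2] at hi

lemma Q_of_vals {v0 v1 v2 v3 v4 : ℕ} (h : QArith v0 v1 v2 v3 v4) (q : Fin 5 → ℕ)
    (h0 : q 0 = v0) (h1 : q 1 = v1) (h2 : q 2 = v2) (h3 : q 3 = v3) (h4 : q 4 = v4) :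
    Q q := by
  rw [Q_arith, h0, h1, h2, h3, h4]; exact h

/-- helper: package a move at pair (j, j+1). -/
lemma build (p : Fin 5 → ℕ) (j : Fin 5) (x y : ℕ) (hx : x ≤ p j) (hy : y ≤ p (j+1))
    (hne : x ≠ p j ∨ y ≠ p (j+1))
    (hQ : Q (fun i => if i = j then x else if i = j+1 then y else p i)) :
    ∃ q, Move CN52 p q ∧ Q q :=
  ⟨_, move_of p j x y hx hy hne, hQ⟩

set_option maxHeartbeats 4000000 in
lemma lemB_norm (p : Fin 5 → ℕ) (hmax : ∀ j, p j ≤ p 0) (hor : p 4 ≤ p 1)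
    (hnQ : ¬ Q p) : ∃ q, Move CN52 p q ∧ Q q := by
  rw [Q_arith] at hnQ
  have m1 := hmax 1; have m2 := hmax 2; have m3 := hmax 3; have m4 := hmax 4
  unfold QArith C at hnQ
  by_cases h1 : p 0 + p 4 ≤ p 2 + p 3
  · refine build p 1 (p 4) (p 0 + p 4 - p 3) (by omega) ?_ ?_ ?_
    · show p 0 + p 4 - p 3 ≤ p 2; omega
    · show p 4 ≠ p 1 ∨ p 0 + p 4 - p 3 ≠ p 2; omega
    · exact Q_of_vals (show QArith (p 0) (p 4) (p 0 + p 4 - p 3) (p 3) (p 4) by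
        unfold QArith C; omega) _ rfl rfl rfl rfl rfl
  by_cases h2 : p 4 ≤ p 2 ∧ p 4 ≤ p 3
  · refine build p 0 (p 2 + p 3 - p 4) (p 4) (by omega) ?_ ?_ ?_
    · show p 4 ≤ p 1; omega
    · show p 2 + p 3 - p 4 ≠ p 0 ∨ p 4 ≠ p 1; omega
    · exact Q_of_vals (show QArith (p 2 + p 3 - p 4) (p 4) (p 2) (p 3) (p 4) by
        unfold QArith C; omega) _ rfl rfl rfl rfl rfl
  by_cases h3 : p 3 < p 4 ∧ p 3 ≤ p 2 ∧ p 2 ≤ p 4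
  · refine build p 0 (p 3) (p 3 + p 4 - p 2) (by omega) ?_ ?_ ?_
    · show p 3 + p 4 - p 2 ≤ p 1; omega
    · show p 3 ≠ p 0 ∨ p 3 + p 4 - p 2 ≠ p 1; omega
    · exact Q_of_vals (show QArith (p 3) (p 3 + p 4 - p 2) (p 2) (p 3) (p 4) by
        unfold QArith C; omega) _ rfl rfl rfl rfl rfl
  by_cases h4 : p 2 < p 3 ∧ p 2 ≤ p 1 ∧ p 3 ≤ p 1 ∧ p 1 + p 2 ≤ p 3 + p 4
  · refine build p 4 (p 1 + p 2 - p 3) (p 2) ?_ ?_ ?_ ?_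
    · show p 1 + p 2 - p 3 ≤ p 4; omega
    · show p 2 ≤ p 0; omega
    · show p 1 + p 2 - p 3 ≠ p 4 ∨ p 2 ≠ p 0; omega
    · exact Q_of_vals (show QArith (p 2) (p 1) (p 2) (p 3) (p 1 + p 2 - p 3) by
        unfold QArith C; omega) _ rfl rfl rfl rfl rfl
  by_cases h5 : p 2 < p 3 ∧ p 2 < p 4 ∧ p 3 + p 4 ≤ p 1 + p 2
  · refine build p 0 (p 2) (p 3 + p 4 - p 2) (by omega) ?_ ?_ ?_
    · show p 3 + p 4 - p 2 ≤ p 1; omega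
    · show p 2 ≠ p 0 ∨ p 3 + p 4 - p 2 ≠ p 1; omega
    · exact Q_of_vals (show QArith (p 2) (p 3 + p 4 - p 2) (p 2) (p 3) (p 4) by
        unfold QArith C; omega) _ rfl rfl rfl rfl rfl
  by_cases h6 : p 2 ≤ p 1 ∧ p 1 ≤ p 3 ∧ p 2 ≤ p 4 ∧ p 2 + p 3 - p 1 ≤ p 0 ∧
      ¬(p 2 = p 4 ∧ p 0 = p 2 + p 3 - p 1)
  · refine build p 4 (p 2) (p 2 + p 3 - p 1) ?_ ?_ ?_ ?_
    · show p 2 ≤ p 4; omega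
    · show p 2 + p 3 - p 1 ≤ p 0; omega
    · show p 2 ≠ p 4 ∨ p 2 + p 3 - p 1 ≠ p 0; omega
    · exact Q_of_vals (show QArith (p 2 + p 3 - p 1) (p 1) (p 2) (p 3) (p 2) by
        unfold QArith C; omega) _ rfl rfl rfl rfl rfl
  by_cases h7 : p 3 ≤ p 4 ∧ p 3 ≤ p 1 ∧ p 4 ≤ p 2 ∧ p 2 + p 3 - p 4 ≤ p 0 ∧
      ¬(p 3 = p 1 ∧ p 0 = p 2 + p 3 - p 4)
  · refine build p 0 (p 2 + p 3 - p 4) (p 3) (by omega) ?_ ?_ ?_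
    · show p 3 ≤ p 1; omega
    · show p 2 + p 3 - p 4 ≠ p 0 ∨ p 3 ≠ p 1; omega
    · exact Q_of_vals (show QArith (p 2 + p 3 - p 4) (p 3) (p 2) (p 3) (p 4) by
        unfold QArith C; omega) _ rfl rfl rfl rfl rfl
  exact absurd trivial (by omega)



-- decide facts
lemma df_false_inv : ∀ k i : Fin 5, dih5 k false (dih5 (-k) false i) = i := by decide
lemma df_true_inv : ∀ k i : Fin 5, dih5 k true (dih5 k true i) = i := by decide
lemma df_surj : ∀ (k : Fin 5) (s : Bool) (i : Fin 5),
    dih5 k s (if s then k - i else i - k) = i := by decide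
lemma df_pair : ∀ (k : Fin 5) (s : Bool) (i j : Fin 5),
    (dih5 k s j = i ∨ dih5 k s j = i+1) →
    (j = (if s then k-i-1 else i-k) ∨ j = (if s then k-i-1 else i-k)+1) := by decide
lemma cf0 : ∀ k i : Fin 5, dih5 k false (i - k) = i := by decide
lemma cf1 : ∀ k i : Fin 5, dih5 k false ((i - k) + 1) = i + 1 := by decide
lemma cf2 : ∀ k i : Fin 5, dih5 k false ((i - k) + 2) = i + 2 := by decide
lemma cf3 : ∀ k i : Fin 5, dih5 k false ((i - k) + 3) = i + 3 := by decide
lemma cf4 : ∀ k i : Fin 5, dih5 k false ((i - k) + 4) = i + 4 := by decide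
lemma ct0 : ∀ k i : Fin 5, dih5 k true (k - i) = i := by decide
lemma ct1 : ∀ k i : Fin 5, dih5 k true ((k - i) + 1) = i + 4 := by decide
lemma ct2 : ∀ k i : Fin 5, dih5 k true ((k - i) + 2) = i + 3 := by decide
lemma ct3 : ∀ k i : Fin 5, dih5 k true ((k - i) + 3) = i + 2 := by decide
lemma ct4 : ∀ k i : Fin 5, dih5 k true ((k - i) + 4) = i + 1 := by decide
lemma sub_inv : ∀ k j : Fin 5, k + (j - k) = j := by decide
lemma sub_inv2 : ∀ k j : Fin 5, k - (k - j) = j := by decide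
lemma em1 : ∀ k : Fin 5, k - 1 = k + 4 := by decide
lemma em2 : ∀ k : Fin 5, k - 2 = k + 3 := by decide
lemma em3 : ∀ k : Fin 5, k - 3 = k + 2 := by decide
lemma em4 : ∀ k : Fin 5, k - 4 = k + 1 := by decide

lemma Q_comp (p : Fin 5 → ℕ) (k : Fin 5) (s : Bool) (h : Q p) :
    Q (fun i => p (dih5 k s i)) := by
  obtain ⟨i₀, hmax, h1, h2⟩ := h
  cases s
  · refine ⟨i₀ - k, ?_, ?_, ?_⟩
    · intro j
      show p (dih5 k false j) ≤ p (dih5 k false (i₀ - k))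
      rw [cf0]; exact hmax _
    · show p (dih5 k false ((i₀ - k) + 1)) = p (dih5 k false ((i₀ - k) + 4))
      rw [cf1, cf4]; exact h1
    · show p (dih5 k false (i₀ - k)) + p (dih5 k false ((i₀ - k) + 1)) =
        p (dih5 k false ((i₀ - k) + 2)) + p (dih5 k false ((i₀ - k) + 3))
      rw [cf0, cf1, cf2, cf3]; exact h2
  · refine ⟨k - i₀, ?_, ?_, ?_⟩
    · intro j
      show p (dih5 k true j) ≤ p (dih5 k true (k - i₀))
      rw [ct0]; exact hmax _
    · show p (dih5 k true ((k - i₀) + 1)) = p (dih5 k true ((k - i₀) + 4))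
      rw [ct1, ct4]; exact h1.symm
    · show p (dih5 k true (k - i₀)) + p (dih5 k true ((k - i₀) + 1)) =
        p (dih5 k true ((k - i₀) + 2)) + p (dih5 k true ((k - i₀) + 3))
      rw [ct0, ct1, ct2, ct3]; omega

lemma move_comp (p q : Fin 5 → ℕ) (k : Fin 5) (s : Bool) (h : Move CN52 p q) :
    Move CN52 (fun i => p (dih5 k s i)) (fun i => q (dih5 k s i)) := by
  obtain ⟨hne, hle, a, ⟨i, rfl⟩, hsub⟩ := h
  refine ⟨?_, fun j => hle _, {(if s then k-i-1 else i-k), (if s then k-i-1 else i-k) + 1},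
    ⟨_, rfl⟩, ?_⟩
  · obtain ⟨j, hj⟩ := Function.ne_iff.mp hne
    refine Function.ne_iff.mpr ⟨if s then k - j else j - k, ?_⟩
    rw [df_surj]; exact hj
  · intro j hj
    have := hsub _ hj
    simp only [Set.mem_insert_iff, Set.mem_singleton_iff] at this ⊢
    exact df_pair k s i j this

lemma lemB (p : Fin 5 → ℕ) (hnQ : ¬ Q p) : ∃ q, Move CN52 p q ∧ Q q := by
  obtain ⟨i0, hi0⟩ := Finite.exists_max p
  rcases le_total (p (i0 + 4)) (p (i0 + 1)) with hor | hor
  · obtain ⟨q', mv', hq'⟩ := lemB_norm (fun i => p (dih5 i0 false i))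
      (fun j => by show p (i0 + j) ≤ p (i0 + 0); simpa using hi0 _)
      (by show p (i0 + 4) ≤ p (i0 + 1); exact hor)
      (fun h => by
        have h2 := Q_comp _ (-i0) false h
        have hfun : (fun i => p (dih5 i0 false (dih5 (-i0) false i))) = p :=
          funext fun i => congrArg p (df_false_inv i0 i)
        rw [hfun] at h2; exact hnQ h2)
    have hmv := move_comp _ q' (-i0) false mv'
    have hfun : (fun i => p (dih5 i0 false (dih5 (-i0) false i))) = p :=
      funext fun i => congrArg p (df_false_inv i0 i)
    rw [hfun] at hmv
    exact ⟨_, hmv, Q_comp q' (-i0) false hq'⟩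
  · obtain ⟨q', mv', hq'⟩ := lemB_norm (fun i => p (dih5 i0 true i))
      (fun j => by show p (i0 - j) ≤ p (i0 - 0); simpa using hi0 _)
      (by show p (i0 - 4) ≤ p (i0 - 1); rw [em4, em1]; exact hor)
      (fun h => by
        have h2 := Q_comp _ i0 true h
        have hfun : (fun i => p (dih5 i0 true (dih5 i0 true i))) = p :=
          funext fun i => congrArg p (df_true_inv i0 i)
        rw [hfun] at h2; exact hnQ h2)
    have hmv := move_comp _ q' i0 true mv'
    have hfun : (fun i => p (dih5 i0 true (dih5 i0 true i))) = p :=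
      funext fun i => congrArg p (df_true_inv i0 i)
    rw [hfun] at hmv
    exact ⟨_, hmv, Q_comp q' i0 true hq'⟩

lemma rhs_iff (p : Fin 5 → ℕ) :
    (∃ (k : Fin 5) (s : Bool),
      (∀ i, p (dih5 k s i) ≤ p (dih5 k s 0)) ∧
      p (dih5 k s 1) = p (dih5 k s 4) ∧
      p (dih5 k s 0) + p (dih5 k s 1) = p (dih5 k s 2) + p (dih5 k s 3)) ↔ Q p := by
  constructor
  · rintro ⟨k, s, hmax, h1, h2⟩
    cases s
    · refine ⟨k, fun j => ?_, h1, ?_⟩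
      · have := hmax (j - k)
        show p j ≤ p k
        rw [show dih5 k false (j - k) = j from cf0 k j] at this
        simpa [dih5] using this
      · show p k + p (k + 1) = p (k + 2) + p (k + 3)
        have : p (k + 0) + p (k + 1) = p (k + 2) + p (k + 3) := h2
        simpa using this
    · refine ⟨k, fun j => ?_, ?_, ?_⟩
      · have := hmax (k - j)
        show p j ≤ p k
        rw [show dih5 k true (k - j) = j from ct0 k j] at this
        simpa [dih5] using this
      · have h1' : p (k - 1) = p (k - 4) := h1
        rw [em1, em4] at h1'
        exact h1'.symm
      · have h1' : p (k - 1) = p (k - 4) := h1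
        have h2' : p (k - 0) + p (k - 1) = p (k - 2) + p (k - 3) := h2
        rw [em1, em4] at h1'
        rw [em1, em2, em3] at h2'
        simp only [sub_zero] at h2'
        show p k + p (k + 1) = p (k + 2) + p (k + 3)
        omega
  · rintro ⟨i, hmax, h1, h2⟩
    refine ⟨i, false, fun j => ?_, ?_, ?_⟩
    · show p (i + j) ≤ p (i + 0)
      simpa using hmax _
    · exact h1
    · show p (i + 0) + p (i + 1) = p (i + 2) + p (i + 3)
      rw [add_zero]; exact h2

lemma move_sum_lt {V : Type} [Fintype V] {A : Set (Set V)} {p q : V → ℕ}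
    (h : Move A p q) : Finset.univ.sum q < Finset.univ.sum p := by
  obtain ⟨hne, hle, -⟩ := h
  refine Finset.sum_lt_sum (fun i _ => hle i) ?_
  obtain ⟨i, hi⟩ := Function.ne_iff.mp hne
  exact ⟨i, Finset.mem_univ i, lt_of_le_of_ne (hle i) hi⟩

lemma main : ∀ (n : ℕ) (p : Fin 5 → ℕ), Finset.univ.sum p ≤ n → (PPos CN52 p ↔ Q p) := by
  intro n
  induction n with
  | zero =>
    intro p hp
    have hz : ∀ i, p i = 0 := by
      intro i
      have h1 : p i ≤ Finset.univ.sum p :=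
        Finset.single_le_sum (fun j _ => Nat.zero_le (p j)) (Finset.mem_univ i)
      omega
    constructor
    · intro _
      refine ⟨0, fun j => ?_, ?_, ?_⟩
      · rw [hz, hz]
      · show p 1 = p 4; rw [hz, hz]
      · show p 0 + p 1 = p 2 + p 3; rw [hz 0, hz 1, hz 2, hz 3]
    · intro _
      rw [PPos]
      intro q hmv _
      have h1 := move_sum_lt hmv
      omega
  | succ n ih =>
    intro p hp
    constructor
    · intro hP
      by_contra hnQ
      obtain ⟨q, hmv, hq⟩ := lemB p hnQ
      have hsum := move_sum_lt hmv
      have hq' : PPos CN52 q := (ih q (by omega)).mpr hq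
      rw [PPos] at hP
      exact hP q hmv hq'
    · intro hQp
      rw [PPos]
      intro q hmv hPq
      have hsum := move_sum_lt hmv
      exact lemA hQp hmv ((ih q (by omega)).mp hPq)


/-- the P-positions of CN(5,2) are exactly the positions that, up
to rotation and reflection, have the form (M, m, c, d, m) with M + m = c + d
and M the maximum stack height. -/
theorem cn52_ppos (p : Fin 5 → ℕ) :
    PPos CN52 p ↔ ∃ (k : Fin 5) (s : Bool),
      (∀ i, p (dih5 k s i) ≤ p (dih5 k s 0)) ∧
      p (dih5 k s 1) = p (dih5 k s 4) ∧
      p (dih5 k s 0) + p (dih5 k s 1) = p (dih5 k s 2) + p (dih5 k s 3) :=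
  (main (Finset.univ.sum p) p le_rfl).trans (rhs_iff p).symm
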